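/- Fix a type T of tuples, a value function v : T → ℝ and a bound M ≥ 0 with |v(t)| ≤ M for every t : T. Fix a natural number m ≥ 1, predicates φ_1, …, φ_m, p : T → Prop, and real weights w_1, …, w_m. For a finite multiset D of elements of T write s(ψ, D) = Σ_{t ∈ D, ψ(t)} v(t) (summed with multiplicity) and c(ψ, D) for the number of tuples in D satisfying ψ. Define the weighted SUM-influence I(p; D) = (Σ_{j=1}^{m} w_j · s(φ_j ∧ p, D)) · min_{1 ≤ j ≤ m} c(φ_j ∧ ¬p, D) / (max_{1 ≤ j ≤ m} c(φ_j, D) + 1), computed over the real numbers. Then for all neighboring databases D and D', |I(p; D) − I(p; D')| ≤ 2·M·Σ_{j=1}^{m} |w_j|. -/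

import Mathlib

private lemma wsis_abs_map_sum_le {T : Type*} (v : T → ℝ) (M : ℝ) (hM : 0 ≤ M)
    (hv : ∀ t, |v t| ≤ M) (E : Multiset T) :
    |(E.map v).sum| ≤ M * E.card := by
  induction E using Multiset.induction with
  | empty => simp
  | cons a s ih =>
    simp only [Multiset.map_cons, Multiset.sum_cons, Multiset.card_cons]
    calc |v a + (s.map v).sum| ≤ |v a| + |(s.map v).sum| := abs_add_le _ _
    _ ≤ M + M * s.card := by have := hv a; linarith
    _ ≤ M * ((s.card : ℕ) + 1 : ℕ) := by
        push_cast
        linarith [le_refl (M * ((s.card : ℝ) + 1))]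

private lemma wsis_card_filter_le_cons {T : Type*} (q : T → Prop) [DecidablePred q]
    (t : T) (D : Multiset T) :
    ((D.filter q).card : ℝ) ≤ (((t ::ₘ D).filter q).card : ℝ) := by
  exact_mod_cast Multiset.card_le_card
    (Multiset.filter_le_filter q (Multiset.le_cons_self D t))

private lemma wsis_card_filter_cons_le {T : Type*} (q : T → Prop) [DecidablePred q]
    (t : T) (D : Multiset T) :
    (((t ::ₘ D).filter q).card : ℝ) ≤ ((D.filter q).card : ℝ) + 1 := by
  rw [Multiset.filter_cons, Multiset.card_add]
  push_cast
  have : Multiset.card (if q t then {t} else 0) ≤ 1 := by split <;> simp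
  have h1 : (Multiset.card (if q t then ({t} : Multiset T) else 0) : ℝ) ≤ 1 := by
    exact_mod_cast this
  linarith

private lemma wsis_card_filter_mono {T : Type*} (q r : T → Prop) [DecidablePred q]
    [DecidablePred r] (h : ∀ t, q t → r t) (D : Multiset T) :
    ((D.filter q).card : ℝ) ≤ ((D.filter r).card : ℝ) := by
  exact_mod_cast Multiset.card_le_card (Multiset.monotone_filter_right D h)

/-- Sensitivity of the weighted SUM influence function for general user questions:
for neighboring databases `D, D'`, `|I(p; D) − I(p; D')| ≤ 2 M Σ_j |w_j|`. -/
theorem weighted_sum_influence_sensitivity {T : Type*}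
    (v : T → ℝ) (M : ℝ) (hM : 0 ≤ M) (hv : ∀ t : T, |v t| ≤ M)
    (m : ℕ) (hm : 1 ≤ m)
    (φ : Fin m → T → Prop) (p : T → Prop)
    [∀ j, DecidablePred (φ j)] [DecidablePred p]
    (w : Fin m → ℝ)
    (I : Multiset T → ℝ)
    (hI : ∀ D : Multiset T,
      I D = (∑ j, w j * ((D.filter fun t => φ j t ∧ p t).map v).sum)
            * (Finset.univ.inf' (Finset.univ_nonempty_iff.mpr ⟨⟨0, hm⟩⟩)
                fun j : Fin m => ((D.filter fun t => φ j t ∧ ¬ p t).card : ℝ))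
            / ((Finset.univ.sup' (Finset.univ_nonempty_iff.mpr ⟨⟨0, hm⟩⟩)
                fun j : Fin m => ((D.filter (φ j)).card : ℝ)) + 1))
    (D D' : Multiset T)
    (hneighbor : (∃ t, D' = t ::ₘ D) ∨ (∃ t, D = t ::ₘ D')) :
    |I D - I D'| ≤ 2 * M * ∑ j, |w j| := by
  have ne : (Finset.univ : Finset (Fin m)).Nonempty :=
    Finset.univ_nonempty_iff.mpr ⟨⟨0, hm⟩⟩
  have key : ∀ (E : Multiset T) (t : T),
      |I (t ::ₘ E) - I E| ≤ 2 * M * ∑ j, |w j| := by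
    intro E t
    rw [hI, hI]
    set W : ℝ := ∑ j, |w j| with hWdef
    have hW : 0 ≤ W := Finset.sum_nonneg fun j _ => abs_nonneg _
    set S : ℝ := ∑ j, w j * ((E.filter fun x => φ j x ∧ p x).map v).sum with hSdef
    set S' : ℝ := ∑ j, w j * (((t ::ₘ E).filter fun x => φ j x ∧ p x).map v).sum
      with hS'def
    set N : ℝ := Finset.univ.inf' ne
      (fun j : Fin m => ((E.filter fun x => φ j x ∧ ¬ p x).card : ℝ)) with hNdef
    set N' : ℝ := Finset.univ.inf' ne
      (fun j : Fin m => (((t ::ₘ E).filter fun x => φ j x ∧ ¬ p x).card : ℝ))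
      with hN'def
    set A : ℝ := Finset.univ.sup' ne
      (fun j : Fin m => ((E.filter (φ j)).card : ℝ)) with hAdef
    set A' : ℝ := Finset.univ.sup' ne
      (fun j : Fin m => (((t ::ₘ E).filter (φ j)).card : ℝ)) with hA'def
    -- basic inequalities
    have hN0 : 0 ≤ N := by
      rw [hNdef]; exact Finset.le_inf' ne _ fun j _ => by positivity
    have hN'0 : 0 ≤ N' := by
      rw [hN'def]; exact Finset.le_inf' ne _ fun j _ => by positivity
    have hNN' : N ≤ N' := by
      rw [hNdef, hN'def]
      apply Finset.le_inf' ne _ fun j _ => ?_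
      exact le_trans
        (Finset.inf'_le (fun j : Fin m => ((E.filter fun x => φ j x ∧ ¬ p x).card : ℝ))
          (Finset.mem_univ j))
        (wsis_card_filter_le_cons _ t E)
    have hN'1 : N' ≤ N + 1 := by
      rw [hN'def]
      obtain ⟨j, -, hj⟩ := Finset.exists_mem_eq_inf' ne
        (fun j : Fin m => ((E.filter fun x => φ j x ∧ ¬ p x).card : ℝ))
      calc Finset.univ.inf' ne
            (fun j : Fin m => (((t ::ₘ E).filter fun x => φ j x ∧ ¬ p x).card : ℝ))
          ≤ (((t ::ₘ E).filter fun x => φ j x ∧ ¬ p x).card : ℝ) :=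
            Finset.inf'_le
              (fun j : Fin m => (((t ::ₘ E).filter fun x => φ j x ∧ ¬ p x).card : ℝ))
              (Finset.mem_univ j)
      _ ≤ ((E.filter fun x => φ j x ∧ ¬ p x).card : ℝ) + 1 :=
            wsis_card_filter_cons_le _ t E
      _ = N + 1 := by rw [hNdef, hj]
    have hAA' : A ≤ A' := by
      rw [hAdef, hA'def]
      apply Finset.sup'_le ne _ fun j _ => ?_
      exact le_trans (wsis_card_filter_le_cons _ t E)
        (Finset.le_sup' (fun j : Fin m => (((t ::ₘ E).filter (φ j)).card : ℝ))
          (Finset.mem_univ j))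
    have hA'1 : A' ≤ A + 1 := by
      rw [hAdef, hA'def]
      apply Finset.sup'_le ne _ fun j _ => ?_
      exact le_trans (wsis_card_filter_cons_le _ t E)
        (add_le_add_left
          (Finset.le_sup' (fun j : Fin m => ((E.filter (φ j)).card : ℝ))
            (Finset.mem_univ j)) 1)
    have hNA : N ≤ A := by
      rw [hNdef, hAdef]
      calc Finset.univ.inf' ne
            (fun j : Fin m => ((E.filter fun x => φ j x ∧ ¬ p x).card : ℝ))
          ≤ ((E.filter fun x => φ ⟨0, hm⟩ x ∧ ¬ p x).card : ℝ) :=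
            Finset.inf'_le
              (fun j : Fin m => ((E.filter fun x => φ j x ∧ ¬ p x).card : ℝ))
              (Finset.mem_univ _)
      _ ≤ ((E.filter (φ ⟨0, hm⟩)).card : ℝ) :=
            wsis_card_filter_mono _ _ (fun x hx => hx.1) E
      _ ≤ _ := Finset.le_sup' (fun j : Fin m => ((E.filter (φ j)).card : ℝ))
            (Finset.mem_univ _)
    have hN'A' : N' ≤ A' := by
      rw [hN'def, hA'def]
      calc Finset.univ.inf' ne
            (fun j : Fin m => (((t ::ₘ E).filter fun x => φ j x ∧ ¬ p x).card : ℝ))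
          ≤ (((t ::ₘ E).filter fun x => φ ⟨0, hm⟩ x ∧ ¬ p x).card : ℝ) :=
            Finset.inf'_le
              (fun j : Fin m => (((t ::ₘ E).filter fun x => φ j x ∧ ¬ p x).card : ℝ))
              (Finset.mem_univ _)
      _ ≤ (((t ::ₘ E).filter (φ ⟨0, hm⟩)).card : ℝ) :=
            wsis_card_filter_mono _ _ (fun x hx => hx.1) (t ::ₘ E)
      _ ≤ _ := Finset.le_sup' (fun j : Fin m => (((t ::ₘ E).filter (φ j)).card : ℝ))
            (Finset.mem_univ _)
    have hA0 : 0 ≤ A := le_trans hN0 hNA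
    have hA'0 : 0 ≤ A' := le_trans hA0 hAA'
    -- bound on |S|
    have hS : |S| ≤ W * (M * A) := by
      calc |S| ≤ ∑ j, |w j * ((E.filter fun x => φ j x ∧ p x).map v).sum| :=
            Finset.abs_sum_le_sum_abs _ _
      _ ≤ ∑ j, |w j| * (M * A) := by
          apply Finset.sum_le_sum
          intro j _
          rw [abs_mul]
          apply mul_le_mul_of_nonneg_left _ (abs_nonneg _)
          calc |((E.filter fun x => φ j x ∧ p x).map v).sum|
              ≤ M * ((E.filter fun x => φ j x ∧ p x).card : ℝ) :=
                wsis_abs_map_sum_le v M hM hv _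
          _ ≤ M * A := by
              apply mul_le_mul_of_nonneg_left _ hM
              rw [hAdef]
              calc ((E.filter fun x => φ j x ∧ p x).card : ℝ)
                  ≤ ((E.filter (φ j)).card : ℝ) :=
                    wsis_card_filter_mono _ _ (fun x hx => hx.1) E
              _ ≤ _ := Finset.le_sup' (fun j : Fin m => ((E.filter (φ j)).card : ℝ))
                    (Finset.mem_univ j)
      _ = W * (M * A) := by rw [hWdef, Finset.sum_mul]
    -- bound on |S' - S|
    have hdS : |S' - S| ≤ W * M := by
      have hs : ∀ j : Fin m, (((t ::ₘ E).filter fun x => φ j x ∧ p x).map v).sum =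
          (if φ j t ∧ p t then v t else 0) +
            ((E.filter fun x => φ j x ∧ p x).map v).sum := by
        intro j
        rw [Multiset.filter_cons, Multiset.map_add, Multiset.sum_add]
        congr 1
        split <;> simp
      have : S' - S = ∑ j, w j * (if φ j t ∧ p t then v t else 0) := by
        rw [hS'def, hSdef, ← Finset.sum_sub_distrib]
        apply Finset.sum_congr rfl
        intro j _
        rw [hs j]
        ring
      rw [this]
      calc |∑ j, w j * (if φ j t ∧ p t then v t else 0)|
          ≤ ∑ j, |w j * (if φ j t ∧ p t then v t else 0)| :=
            Finset.abs_sum_le_sum_abs _ _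
      _ ≤ ∑ j, |w j| * M := by
          apply Finset.sum_le_sum
          intro j _
          rw [abs_mul]
          apply mul_le_mul_of_nonneg_left _ (abs_nonneg _)
          split
          · exact hv t
          · simpa using hM
      _ = W * M := by rw [hWdef, Finset.sum_mul]
    -- finish
    have hd : (0 : ℝ) < A + 1 := by linarith
    have hd' : (0 : ℝ) < A' + 1 := by linarith
    rw [div_sub_div _ _ (ne_of_gt hd') (ne_of_gt hd), abs_div,
      abs_of_pos (mul_pos hd' hd), div_le_iff₀ (mul_pos hd' hd)]
    have decomp : S' * N' * (A + 1) - (A' + 1) * (S * N) =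
        (S' - S) * N' * (A + 1) + S * (N' * (A + 1) - N * (A' + 1)) := by ring
    rw [decomp]
    have hmid : |N' * (A + 1) - N * (A' + 1)| ≤ A + 1 := by
      rw [abs_le]
      constructor <;> nlinarith [hN0, hNN', hN'1, hAA', hA'1, hNA, hA0]
    calc |(S' - S) * N' * (A + 1) + S * (N' * (A + 1) - N * (A' + 1))|
        ≤ |(S' - S) * N' * (A + 1)| + |S * (N' * (A + 1) - N * (A' + 1))| :=
          abs_add_le _ _
    _ = |S' - S| * N' * (A + 1) + |S| * |N' * (A + 1) - N * (A' + 1)| := by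
          rw [abs_mul, abs_mul, abs_mul, abs_of_nonneg hN'0, abs_of_nonneg hd.le]
    _ ≤ (W * M) * (A' + 1) * (A + 1) + (W * (M * A)) * (A + 1) := by
          have t1 : |S' - S| * N' * (A + 1) ≤ (W * M) * (A' + 1) * (A + 1) := by
            have h1 : |S' - S| * N' ≤ (W * M) * (A' + 1) :=
              mul_le_mul hdS (by linarith) hN'0 (mul_nonneg hW hM)
            exact mul_le_mul_of_nonneg_right h1 hd.le
          have t2 : |S| * |N' * (A + 1) - N * (A' + 1)| ≤ (W * (M * A)) * (A + 1) :=
            mul_le_mul hS hmid (abs_nonneg _) (mul_nonneg hW (mul_nonneg hM hA0))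
          linarith
    _ ≤ 2 * M * W * ((A' + 1) * (A + 1)) := by
          nlinarith [mul_nonneg hW hM, hd.le, hd'.le, mul_nonneg (mul_nonneg hW hM) hd.le]
  rcases hneighbor with ⟨t, ht⟩ | ⟨t, ht⟩
  · rw [ht, abs_sub_comm]
    exact key D t
  · rw [ht]
    exact key D' t
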